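/- Let a, b ∈ ℝ_{++}ⁿ be strictly positive probability vectors, C ∈ ℝ₊^{n×n}, γ > 0, K := exp(−C/γ). Fix f, g ∈ ℝⁿ and an index I ∈ {1,…,n}, let P := diag(e^{f/γ}) K diag(e^{g/γ}), and define f' ∈ ℝⁿ by f'_I = γ log a_I − γ log (K e^{g/γ})_I and f'_i = f_i for i ≠ I. Then h(f', g) − h(f, g) = γ ρ(a_I, (P𝟏ₙ)_I), where ρ(x,y) := y − x + x log(x/y). -/

import Mathlib

/-- The dual entropic OT objective
`h(f,g) = ⟨f,a⟩ + ⟨g,b⟩ − γ Σ_{i,j} exp((f_i + g_j − C_{ij})/γ)`. -/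
noncomputable def dualObj {n : ℕ} (a b : Fin n → ℝ) (C : Matrix (Fin n) (Fin n) ℝ)
    (γ : ℝ) (f g : Fin n → ℝ) : ℝ :=
  (∑ i, f i * a i) + (∑ j, g j * b j) -
    γ * ∑ i, ∑ j, Real.exp ((f i + g j - C i j) / γ)

/-- The transport plan `P = diag(e^{f/γ}) K diag(e^{g/γ})` with `K = exp(−C/γ)`. -/
noncomputable def plan {n : ℕ} (C : Matrix (Fin n) (Fin n) ℝ) (γ : ℝ)
    (f g : Fin n → ℝ) : Matrix (Fin n) (Fin n) ℝ :=
  fun i j => Real.exp (f i / γ) * Real.exp (-C i j / γ) * Real.exp (g j / γ)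

/-- The scalar Bregman divergence `ρ(x,y) = y − x + x log(x/y)`. -/
noncomputable def rho (x y : ℝ) : ℝ := y - x + x * Real.log (x / y)

/-- **Value change of a single Greenkhorn-type coordinate update**: updating the
single coordinate `f_I` to `γ log a_I − γ log (K e^{g/γ})_I` changes the dual
objective by exactly `γ ρ(a_I, (P𝟏)_I)`. -/
theorem greenkhorn_single_update_value {n : ℕ} (a b : Fin n → ℝ)
    (C : Matrix (Fin n) (Fin n) ℝ) (γ : ℝ) (hγ : 0 < γ)
    (ha0 : ∀ i, 0 < a i) (hb0 : ∀ j, 0 < b j)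
    (ha1 : ∑ i, a i = 1) (hb1 : ∑ j, b j = 1)
    (hC : ∀ i j, 0 ≤ C i j)
    (f g : Fin n → ℝ) (I : Fin n) (f' : Fin n → ℝ)
    (hf' : f' = Function.update f I (γ * Real.log (a I) -
      γ * Real.log (∑ j, Real.exp (-C I j / γ) * Real.exp (g j / γ)))) :
    dualObj a b C γ f' g - dualObj a b C γ f g =
      γ * rho (a I) (∑ j, plan C γ f g I j) := by
  subst hf'
  set S := ∑ j, Real.exp (-C I j / γ) * Real.exp (g j / γ) with hSdef
  have hS : 0 < S := Finset.sum_pos (fun j _ => by positivity) ⟨I, Finset.mem_univ I⟩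
  set v := γ * Real.log (a I) - γ * Real.log S with hvdef
  have hγ' : γ ≠ 0 := ne_of_gt hγ
  have hv : Real.exp (v / γ) = a I / S := by
    rw [hvdef, show (γ * Real.log (a I) - γ * Real.log S) / γ
        = Real.log (a I) - Real.log S by field_simp]
    rw [Real.exp_sub, Real.exp_log (ha0 I), Real.exp_log hS]
  have hr : ∑ j, plan C γ f g I j = Real.exp (f I / γ) * S := by
    rw [hSdef, Finset.mul_sum]
    exact Finset.sum_congr rfl fun j _ => by simp [plan, mul_assoc]
  have hexp : ∀ (F : Fin n → ℝ) (i : Fin n), (∑ j, Real.exp ((F i + g j - C i j) / γ))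
      = Real.exp (F i / γ) * ∑ j, Real.exp (-C i j / γ) * Real.exp (g j / γ) := by
    intro F i
    rw [Finset.mul_sum]
    refine Finset.sum_congr rfl fun j _ => ?_
    rw [← Real.exp_add, ← Real.exp_add, show (F i + g j - C i j) / γ
        = F i / γ + (-C i j / γ + g j / γ) by ring]
  have key1 : (∑ i, Function.update f I v i * a i) - ∑ i, f i * a i
      = (v - f I) * a I := by
    rw [← Finset.sum_sub_distrib]
    rw [Finset.sum_eq_single I (fun i _ hi => by
      rw [Function.update_of_ne hi]; ring) (fun h => absurd (Finset.mem_univ I) h)]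
    rw [Function.update_self]; ring
  have key2 : (∑ i, ∑ j, Real.exp ((Function.update f I v i + g j - C i j) / γ))
      - ∑ i, ∑ j, Real.exp ((f i + g j - C i j) / γ)
      = Real.exp (v / γ) * S - Real.exp (f I / γ) * S := by
    rw [← Finset.sum_sub_distrib]
    rw [Finset.sum_eq_single I (fun i _ hi => by
      rw [hexp, hexp, Function.update_of_ne hi]; ring)
      (fun h => absurd (Finset.mem_univ I) h)]
    rw [hexp, hexp, Function.update_self]
  have hrpos : 0 < Real.exp (f I / γ) * S := by positivity
  have hlogr : Real.log (Real.exp (f I / γ) * S) = f I / γ + Real.log S := by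
    rw [Real.log_mul (Real.exp_ne_zero _) (ne_of_gt hS), Real.log_exp]
  have hdiv : Real.log (a I / (Real.exp (f I / γ) * S))
      = Real.log (a I) - (f I / γ + Real.log S) := by
    rw [Real.log_div (ne_of_gt (ha0 I)) (ne_of_gt hrpos), hlogr]
  have hvS : Real.exp (v / γ) * S = a I := by
    rw [hv, div_mul_cancel₀ _ (ne_of_gt hS)]
  simp only [dualObj, rho, hr, hdiv]
  have : ((∑ i, Function.update f I v i * a i) + (∑ j, g j * b j)
        - γ * ∑ i, ∑ j, Real.exp ((Function.update f I v i + g j - C i j) / γ))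
      - ((∑ i, f i * a i) + (∑ j, g j * b j)
        - γ * ∑ i, ∑ j, Real.exp ((f i + g j - C i j) / γ))
      = ((∑ i, Function.update f I v i * a i) - ∑ i, f i * a i)
        - γ * (((∑ i, ∑ j, Real.exp ((Function.update f I v i + g j - C i j) / γ))
          - ∑ i, ∑ j, Real.exp ((f i + g j - C i j) / γ))) := by ring
  rw [this, key1, key2, hvS, hvdef]
  field_simp
  ring
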